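/- Let H₀, H_i, H_j be complex Hilbert spaces, N a von Neumann algebra on H₀ with commutant N′, and Ω ∈ H₀. Let π_i : N → B(H_i) and π_j : N′ → B(H_j) be unital *-homomorphisms. Suppose Z₁, Z₂ : H₀ → H_i are bounded operators with Z_m y = π_i(y) Z_m for all y ∈ N and m = 1,2, and W₁, W₂ : H₀ → H_j are bounded operators with W_m x = π_j(x) W_m for all x ∈ N′ and m = 1,2. Then Z₂* Z₁ ∈ N′, W₂* W₁ ∈ N, and the following four complex numbers are equal: ⟨ W₂* W₁ Z₂* Z₁ Ω , Ω ⟩ = ⟨ Z₂* Z₁ W₂* W₁ Ω , Ω ⟩ = ⟨ π_j(Z₂* Z₁) W₁ Ω , W₂ Ω ⟩ = ⟨ π_i(W₂* W₁) Z₁ Ω , Z₂ Ω ⟩. -/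
import Mathlib


open scoped InnerProductSpace

set_option maxHeartbeats 1000000 in
private lemma aux_comm
    {H₀ K : Type*}
    [NormedAddCommGroup H₀] [InnerProductSpace ℂ H₀] [CompleteSpace H₀]
    [NormedAddCommGroup K] [InnerProductSpace ℂ K] [CompleteSpace K]
    (M : VonNeumannAlgebra H₀) (π : ↥M.toStarSubalgebra →⋆ₐ[ℂ] (K →L[ℂ] K))
    (A₁ A₂ : H₀ →L[ℂ] K)
    (hA₁ : ∀ y : ↥M.toStarSubalgebra, A₁.comp (y : H₀ →L[ℂ] H₀) = (π y).comp A₁)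
    (hA₂ : ∀ y : ↥M.toStarSubalgebra, A₂.comp (y : H₀ →L[ℂ] H₀) = (π y).comp A₂)
    (g : H₀ →L[ℂ] H₀) (hg : g ∈ M) :
    g * ((ContinuousLinearMap.adjoint A₂).comp A₁)
      = ((ContinuousLinearMap.adjoint A₂).comp A₁) * g := by
  set y : ↥M.toStarSubalgebra := ⟨g, hg⟩
  have h2 : A₂.comp (star g) = (π (star y)).comp A₂ := hA₂ (star y)
  have h2' := congrArg ContinuousLinearMap.adjoint h2
  rw [ContinuousLinearMap.adjoint_comp, ContinuousLinearMap.adjoint_comp,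
    ← ContinuousLinearMap.star_eq_adjoint (star g), star_star,
    map_star, ← ContinuousLinearMap.star_eq_adjoint (star (π y)), star_star] at h2'
  have h1 : A₁.comp g = (π y).comp A₁ := hA₁ y
  show g.comp ((ContinuousLinearMap.adjoint A₂).comp A₁)
    = ((ContinuousLinearMap.adjoint A₂).comp A₁).comp g
  rw [← ContinuousLinearMap.comp_assoc, h2', ContinuousLinearMap.comp_assoc, ← h1,
    ContinuousLinearMap.comp_assoc]


set_option maxHeartbeats 1000000 in
/-- Equivalent formulas for the inner product defining the Connes fusion.
Let `N` be a von Neumann algebra on `H₀` with commutant `N′`, `π_i : N → B(H_i)` and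
`π_j : N′ → B(H_j)` unital *-homomorphisms, and let `Z₁, Z₂ : H₀ → H_i` intertwine `N` with
`π_i`, and `W₁, W₂ : H₀ → H_j` intertwine `N′` with `π_j`.  Then `Z₂* Z₁ ∈ N′`, `W₂* W₁ ∈ N`,
and `⟨W₂*W₁ Z₂*Z₁ Ω, Ω⟩ = ⟨Z₂*Z₁ W₂*W₁ Ω, Ω⟩ = ⟨π_j(Z₂*Z₁) W₁Ω, W₂Ω⟩ = ⟨π_i(W₂*W₁) Z₁Ω, Z₂Ω⟩`.
(Here `⟨·,·⟩` is linear in the first variable, so `⟨u, v⟩` is rendered as `⟪v, u⟫_ℂ` in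
Mathlib's convention.) -/
theorem statement5
    {H₀ Hi Hj : Type*}
    [NormedAddCommGroup H₀] [InnerProductSpace ℂ H₀] [CompleteSpace H₀]
    [NormedAddCommGroup Hi] [InnerProductSpace ℂ Hi] [CompleteSpace Hi]
    [NormedAddCommGroup Hj] [InnerProductSpace ℂ Hj] [CompleteSpace Hj]
    (N : VonNeumannAlgebra H₀) (Ω : H₀)
    (πi : ↥N.toStarSubalgebra →⋆ₐ[ℂ] (Hi →L[ℂ] Hi))
    (πj : ↥N.commutant.toStarSubalgebra →⋆ₐ[ℂ] (Hj →L[ℂ] Hj))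
    (Z₁ Z₂ : H₀ →L[ℂ] Hi) (W₁ W₂ : H₀ →L[ℂ] Hj)
    (hZ₁ : ∀ y : ↥N.toStarSubalgebra, Z₁.comp (y : H₀ →L[ℂ] H₀) = (πi y).comp Z₁)
    (hZ₂ : ∀ y : ↥N.toStarSubalgebra, Z₂.comp (y : H₀ →L[ℂ] H₀) = (πi y).comp Z₂)
    (hW₁ : ∀ x : ↥N.commutant.toStarSubalgebra, W₁.comp (x : H₀ →L[ℂ] H₀) = (πj x).comp W₁)
    (hW₂ : ∀ x : ↥N.commutant.toStarSubalgebra, W₂.comp (x : H₀ →L[ℂ] H₀) = (πj x).comp W₂) :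
    ∃ (h₁ : (ContinuousLinearMap.adjoint Z₂).comp Z₁ ∈ N.commutant)
      (h₂ : (ContinuousLinearMap.adjoint W₂).comp W₁ ∈ N),
      inner (𝕜 := ℂ) Ω
          (((ContinuousLinearMap.adjoint W₂).comp W₁)
            (((ContinuousLinearMap.adjoint Z₂).comp Z₁) Ω)) =
        inner (𝕜 := ℂ) Ω
          (((ContinuousLinearMap.adjoint Z₂).comp Z₁)
            (((ContinuousLinearMap.adjoint W₂).comp W₁) Ω)) ∧
      inner (𝕜 := ℂ) Ω
          (((ContinuousLinearMap.adjoint Z₂).comp Z₁)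
            (((ContinuousLinearMap.adjoint W₂).comp W₁) Ω)) =
        inner (𝕜 := ℂ) (W₂ Ω)
          ((πj ⟨(ContinuousLinearMap.adjoint Z₂).comp Z₁, h₁⟩) (W₁ Ω)) ∧
      inner (𝕜 := ℂ) (W₂ Ω)
          ((πj ⟨(ContinuousLinearMap.adjoint Z₂).comp Z₁, h₁⟩) (W₁ Ω)) =
        inner (𝕜 := ℂ) (Z₂ Ω)
          ((πi ⟨(ContinuousLinearMap.adjoint W₂).comp W₁, h₂⟩) (Z₁ Ω)) := by
  set Z : H₀ →L[ℂ] H₀ := (ContinuousLinearMap.adjoint Z₂).comp Z₁ with hZdef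
  set W : H₀ →L[ℂ] H₀ := (ContinuousLinearMap.adjoint W₂).comp W₁ with hWdef
  have h₁ : Z ∈ N.commutant := by
    rw [VonNeumannAlgebra.mem_commutant_iff]
    intro g hg
    exact aux_comm N πi Z₁ Z₂ hZ₁ hZ₂ g hg
  have h₂ : W ∈ N := by
    have h : W ∈ N.commutant.commutant := by
      rw [VonNeumannAlgebra.mem_commutant_iff]
      intro g hg
      exact aux_comm N.commutant πj W₁ W₂ hW₁ hW₂ g hg
    rwa [VonNeumannAlgebra.commutant_commutant] at h
  have hcomm : W * Z = Z * W := VonNeumannAlgebra.mem_commutant_iff.mp h₁ W h₂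
  have hπj : (πj ⟨Z, h₁⟩) (W₁ Ω) = W₁ (Z Ω) := by
    have h := congrFun (congrArg DFunLike.coe (hW₁ ⟨Z, h₁⟩).symm) Ω
    simpa using h
  have hπi : (πi ⟨W, h₂⟩) (Z₁ Ω) = Z₁ (W Ω) := by
    have h := congrFun (congrArg DFunLike.coe (hZ₁ ⟨W, h₂⟩).symm) Ω
    simpa using h
  have e1 : inner (𝕜 := ℂ) Ω (W (Z Ω)) = inner (𝕜 := ℂ) Ω (Z (W Ω)) := by
    have h := congrFun (congrArg DFunLike.coe hcomm) Ω
    simp only [ContinuousLinearMap.mul_apply] at h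
    rw [h]
  have e2 : inner (𝕜 := ℂ) Ω (W (Z Ω)) = inner (𝕜 := ℂ) (W₂ Ω) (W₁ (Z Ω)) := by
    simp only [hWdef, ContinuousLinearMap.comp_apply]
    exact ContinuousLinearMap.adjoint_inner_right W₂ Ω (W₁ (Z Ω))
  have e3 : inner (𝕜 := ℂ) Ω (Z (W Ω)) = inner (𝕜 := ℂ) (Z₂ Ω) (Z₁ (W Ω)) := by
    simp only [hZdef, ContinuousLinearMap.comp_apply]
    exact ContinuousLinearMap.adjoint_inner_right Z₂ Ω (Z₁ (W Ω))
  exact ⟨h₁, h₂, e1, by rw [hπj, ← e1, e2], by rw [hπj, hπi, ← e2, e1, e3]⟩
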